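/- arXiv:q-alg/9708012 — 4 statements merged into one kernel-verified Lean document; each statement's English description precedes it below -/
import Mathlib

section
/- Let P : ℝ³ → ℝ³ be a smooth map, defining the bracket {f,g}_P(x) = ⟨P(x), ∇f(x) × ∇g(x)⟩ on smooth functions. Then the Jacobi identity {{f,g}_P,h}_P + {{g,h}_P,f}_P + {{h,f}_P,g}_P = 0 holds for all smooth f,g,h : ℝ³ → ℝ if and only if ⟨P(x), (curl P)(x)⟩ = 0 for all x ∈ ℝ³. -/
open scoped ContDiff

noncomputable section

/-- Partial derivative in the `i`-th coordinate direction. -/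
def pd (i : Fin 3) (f : (Fin 3 → ℝ) → ℝ) : (Fin 3 → ℝ) → ℝ :=
  fun x => fderiv ℝ f x (Pi.single i 1)

/-- Gradient of a function on ℝ³. -/
def grad (f : (Fin 3 → ℝ) → ℝ) (x : Fin 3 → ℝ) : Fin 3 → ℝ :=
  fun i => pd i f x

/-- Cross product on ℝ³. -/
def cross (u v : Fin 3 → ℝ) : Fin 3 → ℝ :=
  ![u 1 * v 2 - u 2 * v 1, u 2 * v 0 - u 0 * v 2, u 0 * v 1 - u 1 * v 0]

/-- Euclidean inner product on ℝ³. -/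
def dot (u v : Fin 3 → ℝ) : ℝ := ∑ i, u i * v i


/-- The curl of a vector field on ℝ³: `(curl P)_i = ∑ ε_{ijk} ∂_j P_k`. -/
def curl (P : (Fin 3 → ℝ) → (Fin 3 → ℝ)) (x : Fin 3 → ℝ) : Fin 3 → ℝ :=
  ![pd 1 (fun y => P y 2) x - pd 2 (fun y => P y 1) x,
    pd 2 (fun y => P y 0) x - pd 0 (fun y => P y 2) x,
    pd 0 (fun y => P y 1) x - pd 1 (fun y => P y 0) x]

/-- The bracket {f,g}_P(x) = ⟨P(x), ∇f(x) × ∇g(x)⟩ associated to a Poisson vector P. -/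
def pb (P : (Fin 3 → ℝ) → (Fin 3 → ℝ)) (f g : (Fin 3 → ℝ) → ℝ) : (Fin 3 → ℝ) → ℝ :=
  fun x => dot (P x) (cross (grad f x) (grad g x))

lemma contDiff_pd {f : (Fin 3 → ℝ) → ℝ} (hf : ContDiff ℝ ∞ f) (i : Fin 3) :
    ContDiff ℝ ∞ (pd i f) := by
  have h := hf.fderiv_right (m := ∞) le_rfl
  exact (ContinuousLinearMap.apply ℝ ℝ (Pi.single i 1)).contDiff.comp h

lemma diffAt {u : (Fin 3 → ℝ) → ℝ} (hu : ContDiff ℝ ∞ u) (x : Fin 3 → ℝ) :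
    DifferentiableAt ℝ u x := (hu.differentiable (by simp)).differentiableAt

lemma pd_mul {u v : (Fin 3 → ℝ) → ℝ} {x : Fin 3 → ℝ} (hu : DifferentiableAt ℝ u x)
    (hv : DifferentiableAt ℝ v x) (i : Fin 3) :
    pd i (fun y => u y * v y) x = pd i u x * v x + u x * pd i v x := by
  simp [pd, fderiv_fun_mul hu hv]; ring

lemma pd_add {u v : (Fin 3 → ℝ) → ℝ} {x : Fin 3 → ℝ} (hu : DifferentiableAt ℝ u x)
    (hv : DifferentiableAt ℝ v x) (i : Fin 3) :
    pd i (fun y => u y + v y) x = pd i u x + pd i v x := by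
  simp [pd, fderiv_fun_add hu hv]

lemma pd_sub {u v : (Fin 3 → ℝ) → ℝ} {x : Fin 3 → ℝ} (hu : DifferentiableAt ℝ u x)
    (hv : DifferentiableAt ℝ v x) (i : Fin 3) :
    pd i (fun y => u y - v y) x = pd i u x - pd i v x := by
  simp [pd, fderiv_fun_sub hu hv]

lemma pd_comm {f : (Fin 3 → ℝ) → ℝ} (hf : ContDiff ℝ ∞ f) (i j : Fin 3) (x : Fin 3 → ℝ) :
    pd i (pd j f) x = pd j (pd i f) x := by
  have hsym : IsSymmSndFDerivAt ℝ f x :=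
    hf.contDiffAt.isSymmSndFDerivAt (by rw [minSmoothness_of_isRCLikeNormedField]; norm_cast)
  have key : ∀ v w : Fin 3 → ℝ, fderiv ℝ (fun y => fderiv ℝ f y w) x v
      = fderiv ℝ (fderiv ℝ f) x v w := by
    intro v w
    have hd : DifferentiableAt ℝ (fderiv ℝ f) x :=
      ((hf.fderiv_right (m := ∞) le_rfl).differentiable
        (by simp)).differentiableAt
    rw [fderiv_clm_apply hd (differentiableAt_const w)]
    simp
  show fderiv ℝ (fun y => fderiv ℝ f y (Pi.single j 1)) x (Pi.single i 1) =
    fderiv ℝ (fun y => fderiv ℝ f y (Pi.single i 1)) x (Pi.single j 1)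
  rw [key, key, hsym]

lemma contDiff_comp_proj {P : (Fin 3 → ℝ) → (Fin 3 → ℝ)} (hP : ContDiff ℝ ∞ P) (k : Fin 3) :
    ContDiff ℝ ∞ (fun y => P y k) :=
  (ContinuousLinearMap.proj (R := ℝ) (φ := fun _ : Fin 3 => ℝ) k).contDiff.comp hP

lemma pb_apply (P : (Fin 3 → ℝ) → (Fin 3 → ℝ)) (u v : (Fin 3 → ℝ) → ℝ) (x : Fin 3 → ℝ) :
    pb P u v x =
      P x 0 * (pd 1 u x * pd 2 v x - pd 2 u x * pd 1 v x)
    + P x 1 * (pd 2 u x * pd 0 v x - pd 0 u x * pd 2 v x)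
    + P x 2 * (pd 0 u x * pd 1 v x - pd 1 u x * pd 0 v x) := by
  simp [pb, dot, cross, grad, Fin.sum_univ_three]

lemma pd_pb (P : (Fin 3 → ℝ) → (Fin 3 → ℝ)) {f g : (Fin 3 → ℝ) → ℝ}
    (hP : ContDiff ℝ ∞ P) (hf : ContDiff ℝ ∞ f) (hg : ContDiff ℝ ∞ g)
    (i : Fin 3) (x : Fin 3 → ℝ) :
    pd i (pb P f g) x =
      pd i (fun y => P y 0) x * (pd 1 f x * pd 2 g x - pd 2 f x * pd 1 g x)
    + pd i (fun y => P y 1) x * (pd 2 f x * pd 0 g x - pd 0 f x * pd 2 g x)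
    + pd i (fun y => P y 2) x * (pd 0 f x * pd 1 g x - pd 1 f x * pd 0 g x)
    + P x 0 * ((pd i (pd 1 f) x * pd 2 g x + pd 1 f x * pd i (pd 2 g) x)
             - (pd i (pd 2 f) x * pd 1 g x + pd 2 f x * pd i (pd 1 g) x))
    + P x 1 * ((pd i (pd 2 f) x * pd 0 g x + pd 2 f x * pd i (pd 0 g) x)
             - (pd i (pd 0 f) x * pd 2 g x + pd 0 f x * pd i (pd 2 g) x))
    + P x 2 * ((pd i (pd 0 f) x * pd 1 g x + pd 0 f x * pd i (pd 1 g) x)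
             - (pd i (pd 1 f) x * pd 0 g x + pd 1 f x * pd i (pd 0 g) x)) := by
  have e : pb P f g = fun y =>
      P y 0 * (pd 1 f y * pd 2 g y - pd 2 f y * pd 1 g y)
    + P y 1 * (pd 2 f y * pd 0 g y - pd 0 f y * pd 2 g y)
    + P y 2 * (pd 0 f y * pd 1 g y - pd 1 f y * pd 0 g y) := by
    funext y; exact pb_apply P f g y
  have hQ0 : ContDiff ℝ ∞ (fun y => pd 1 f y * pd 2 g y - pd 2 f y * pd 1 g y) :=
    ((contDiff_pd hf 1).mul (contDiff_pd hg 2)).sub ((contDiff_pd hf 2).mul (contDiff_pd hg 1))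
  have hQ1 : ContDiff ℝ ∞ (fun y => pd 2 f y * pd 0 g y - pd 0 f y * pd 2 g y) :=
    ((contDiff_pd hf 2).mul (contDiff_pd hg 0)).sub ((contDiff_pd hf 0).mul (contDiff_pd hg 2))
  have hQ2 : ContDiff ℝ ∞ (fun y => pd 0 f y * pd 1 g y - pd 1 f y * pd 0 g y) :=
    ((contDiff_pd hf 0).mul (contDiff_pd hg 1)).sub ((contDiff_pd hf 1).mul (contDiff_pd hg 0))
  have hT0 : DifferentiableAt ℝ
      (fun y => P y 0 * (pd 1 f y * pd 2 g y - pd 2 f y * pd 1 g y)) x :=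
    diffAt ((contDiff_comp_proj hP 0).mul hQ0) x
  have hT1 : DifferentiableAt ℝ
      (fun y => P y 1 * (pd 2 f y * pd 0 g y - pd 0 f y * pd 2 g y)) x :=
    diffAt ((contDiff_comp_proj hP 1).mul hQ1) x
  have hT2 : DifferentiableAt ℝ
      (fun y => P y 2 * (pd 0 f y * pd 1 g y - pd 1 f y * pd 0 g y)) x :=
    diffAt ((contDiff_comp_proj hP 2).mul hQ2) x
  have hT01 : DifferentiableAt ℝ
      (fun y => P y 0 * (pd 1 f y * pd 2 g y - pd 2 f y * pd 1 g y)
              + P y 1 * (pd 2 f y * pd 0 g y - pd 0 f y * pd 2 g y)) x := hT0.add hT1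
  have hA : ∀ a b : Fin 3, DifferentiableAt ℝ (fun y => pd a f y * pd b g y) x :=
    fun a b => diffAt ((contDiff_pd hf a).mul (contDiff_pd hg b)) x
  rw [e, pd_add hT01 hT2, pd_add hT0 hT1,
    pd_mul (diffAt (contDiff_comp_proj hP 0) x) (diffAt hQ0 x),
    pd_mul (diffAt (contDiff_comp_proj hP 1) x) (diffAt hQ1 x),
    pd_mul (diffAt (contDiff_comp_proj hP 2) x) (diffAt hQ2 x),
    pd_sub (hA 1 2) (hA 2 1), pd_sub (hA 2 0) (hA 0 2), pd_sub (hA 0 1) (hA 1 0),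
    pd_mul (diffAt (contDiff_pd hf 1) x) (diffAt (contDiff_pd hg 2) x),
    pd_mul (diffAt (contDiff_pd hf 2) x) (diffAt (contDiff_pd hg 1) x),
    pd_mul (diffAt (contDiff_pd hf 2) x) (diffAt (contDiff_pd hg 0) x),
    pd_mul (diffAt (contDiff_pd hf 0) x) (diffAt (contDiff_pd hg 2) x),
    pd_mul (diffAt (contDiff_pd hf 0) x) (diffAt (contDiff_pd hg 1) x),
    pd_mul (diffAt (contDiff_pd hf 1) x) (diffAt (contDiff_pd hg 0) x)]
  ring

lemma contDiff_pb (P : (Fin 3 → ℝ) → (Fin 3 → ℝ)) {f g : (Fin 3 → ℝ) → ℝ}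
    (hP : ContDiff ℝ ∞ P) (hf : ContDiff ℝ ∞ f) (hg : ContDiff ℝ ∞ g) :
    ContDiff ℝ ∞ (pb P f g) := by
  have e : pb P f g = fun y =>
      P y 0 * (pd 1 f y * pd 2 g y - pd 2 f y * pd 1 g y)
    + P y 1 * (pd 2 f y * pd 0 g y - pd 0 f y * pd 2 g y)
    + P y 2 * (pd 0 f y * pd 1 g y - pd 1 f y * pd 0 g y) := by
    funext y; exact pb_apply P f g y
  rw [e]
  exact (((contDiff_comp_proj hP 0).mul
      (((contDiff_pd hf 1).mul (contDiff_pd hg 2)).sub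
       ((contDiff_pd hf 2).mul (contDiff_pd hg 1)))).add
    ((contDiff_comp_proj hP 1).mul
      (((contDiff_pd hf 2).mul (contDiff_pd hg 0)).sub
       ((contDiff_pd hf 0).mul (contDiff_pd hg 2))))).add
    ((contDiff_comp_proj hP 2).mul
      (((contDiff_pd hf 0).mul (contDiff_pd hg 1)).sub
       ((contDiff_pd hf 1).mul (contDiff_pd hg 0))))

lemma jacobiator (P : (Fin 3 → ℝ) → (Fin 3 → ℝ)) {f g h : (Fin 3 → ℝ) → ℝ}
    (hP : ContDiff ℝ ∞ P) (hf : ContDiff ℝ ∞ f) (hg : ContDiff ℝ ∞ g)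
    (hh : ContDiff ℝ ∞ h) (x : Fin 3 → ℝ) :
    pb P (pb P f g) h x + pb P (pb P g h) f x + pb P (pb P h f) g x =
      dot (P x) (curl P x) * dot (grad f x) (cross (grad g x) (grad h x)) := by
  rw [pb_apply P (pb P f g) h x, pb_apply P (pb P g h) f x, pb_apply P (pb P h f) g x]
  simp only [pd_pb P hP hf hg, pd_pb P hP hg hh, pd_pb P hP hh hf]
  simp only [dot, curl, cross, grad, Fin.sum_univ_three, Matrix.cons_val_zero,
    Matrix.cons_val_one, Matrix.head_cons, Matrix.cons_val_two, Matrix.tail_cons]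
  simp only [pd_comm hf 1 0, pd_comm hf 2 0, pd_comm hf 2 1,
    pd_comm hg 1 0, pd_comm hg 2 0, pd_comm hg 2 1,
    pd_comm hh 1 0, pd_comm hh 2 0, pd_comm hh 2 1]
  ring

lemma pd_coord (i j : Fin 3) (x : Fin 3 → ℝ) :
    pd i (fun y => y j) x = if j = i then 1 else 0 := by
  have : (fun y : Fin 3 → ℝ => y j) =
      (ContinuousLinearMap.proj (R := ℝ) (φ := fun _ : Fin 3 => ℝ) j) := rfl
  simp [pd, this, ContinuousLinearMap.fderiv, Pi.single_apply]

/-- **Jacobi identity ⟺ P·(rot P) = 0.**  For a smooth vector field P on ℝ³, the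
bracket {f,g}_P = ⟨P, ∇f × ∇g⟩ satisfies the Jacobi identity for all smooth f, g, h
if and only if ⟨P(x), (curl P)(x)⟩ = 0 for every x. -/
theorem jacobi_iff_dot_curl_eq_zero
    (P : (Fin 3 → ℝ) → (Fin 3 → ℝ)) (hP : ContDiff ℝ ∞ P) :
    (∀ f g h : (Fin 3 → ℝ) → ℝ, ContDiff ℝ ∞ f → ContDiff ℝ ∞ g → ContDiff ℝ ∞ h →
      ∀ x, pb P (pb P f g) h x + pb P (pb P g h) f x + pb P (pb P h f) g x = 0) ↔
    (∀ x, dot (P x) (curl P x) = 0) := by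
  constructor
  · intro H x
    have hc : ∀ j : Fin 3, ContDiff ℝ ∞ (fun y : Fin 3 → ℝ => y j) := fun j =>
      (ContinuousLinearMap.proj (R := ℝ) (φ := fun _ : Fin 3 => ℝ) j).contDiff
    have h1 := H _ _ _ (hc 0) (hc 1) (hc 2) x
    rw [jacobiator P hP (hc 0) (hc 1) (hc 2) x] at h1
    have h2 : dot (grad (fun y => y 0) x)
        (cross (grad (fun y => y 1) x) (grad (fun y => y 2) x)) = 1 := by
      simp [dot, cross, grad, pd_coord, Fin.sum_univ_three]
    rw [h2, mul_one] at h1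
    exact h1
  · intro H f g h hf hg hh x
    rw [jacobiator P hP hf hg hh x, H x, zero_mul]


end
end

section
/- Let A be a commutative ℚ-algebra, k ≥ 2 an integer, and M₁, …, M_{k−1} : A × A → A additive bilinear maps satisfying the Weyl-type parity M_l(f,g) = (−1)^l M_l(g,f) for all f,g ∈ A and 1 ≤ l ≤ k−1. Define R_k = (1/2) Σ_{l=1}^{k−1} [M_l, M_{k−l}]. Then R_k(f,g,h) = −(−1)^k R_k(h,g,f) for all f,g,h ∈ A; in particular, if k is odd then R_k is symmetric under reversal of its arguments and its total antisymmetrization vanishes: Σ_{σ ∈ S₃} sgn(σ) R_k(x_{σ(1)}, x_{σ(2)}, x_{σ(3)}) = 0. -/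
/-- Gerstenhaber bracket of two bilinear maps:
`[M,N](f,g,h) = M(N(f,g),h) − M(f,N(g,h)) + N(M(f,g),h) − N(f,M(g,h))`. -/
def gerstenhaber {A : Type*} [CommRing A] (M N : A → A → A) : A → A → A → A :=
  fun f g h => M (N f g) h - M f (N g h) + N (M f g) h - N f (M g h)

/-- **Parity of R_k for Weyl-type star products:** if the additive bilinear maps
M₁, …, M_{k−1} satisfy the Weyl-type parity M_l(f,g) = (−1)^l M_l(g,f), then
R_k = (1/2)∑_{l=1}^{k−1} [M_l, M_{k−l}] satisfies R_k(f,g,h) = −(−1)^k R_k(h,g,f);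
in particular for k odd, R_k is symmetric under reversal of its arguments and its
total antisymmetrization vanishes. -/
theorem Rk_parity {A : Type*} [CommRing A] [Algebra ℚ A] (k : ℕ) (hk : 2 ≤ k)
    (M : ℕ → A → A → A)
    (haddl : ∀ l, 1 ≤ l → l ≤ k - 1 → ∀ x y z : A, M l (x + y) z = M l x z + M l y z)
    (haddr : ∀ l, 1 ≤ l → l ≤ k - 1 → ∀ x y z : A, M l x (y + z) = M l x y + M l x z)
    (hsym : ∀ l, 1 ≤ l → l ≤ k - 1 → ∀ f g : A, M l f g = (-1 : A) ^ l * M l g f)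
    (R : A → A → A → A)
    (hR : ∀ f g h : A,
      R f g h = (1 / 2 : ℚ) • ∑ l ∈ Finset.Ico 1 k, gerstenhaber (M l) (M (k - l)) f g h) :
    (∀ f g h : A, R f g h = -((-1 : A) ^ k * R h g f)) ∧
    (Odd k → ∀ f g h : A,
      ∑ σ : Equiv.Perm (Fin 3),
        (Equiv.Perm.sign σ : ℤ) • R (![f, g, h] (σ 0)) (![f, g, h] (σ 1)) (![f, g, h] (σ 2))
          = 0) := by
  -- right-multiplication by (-1)^n pulls out of the second argument
  have hpull : ∀ m, 1 ≤ m → m ≤ k - 1 → ∀ (n : ℕ) (x y : A),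
      M m x ((-1 : A) ^ n * y) = (-1 : A) ^ n * M m x y := by
    intro m hm1 hm2 n x y
    have h0 : M m x 0 = 0 := by
      have h := haddr m hm1 hm2 x 0 0
      simp only [add_zero] at h
      exact (left_eq_add.mp h)
    have hneg : M m x (-y) = -M m x y := by
      have h1 := haddr m hm1 hm2 x y (-y)
      rw [add_neg_cancel, h0] at h1
      linear_combination -h1
    rcases Nat.even_or_odd n with he | ho
    · rw [he.neg_one_pow, one_mul, one_mul]
    · rw [ho.neg_one_pow, neg_one_mul, neg_one_mul, hneg]
  have hkey : ∀ f g h : A, ∀ l ∈ Finset.Ico 1 k,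
      gerstenhaber (M l) (M (k - l)) h g f
        = -((-1 : A) ^ k * gerstenhaber (M l) (M (k - l)) f g h) := by
    intro f g h l hl
    rw [Finset.mem_Ico] at hl
    have hl1 : 1 ≤ l := hl.1
    have hl2 : l ≤ k - 1 := by omega
    have hl1' : 1 ≤ k - l := by omega
    have hl2' : k - l ≤ k - 1 := by omega
    have hsl := hsym l hl1 hl2
    have hsl' := hsym (k - l) hl1' hl2'
    have hp := hpull l hl1 hl2
    have hp' := hpull (k - l) hl1' hl2'
    have hee : (-1 : A) ^ l * (-1 : A) ^ (k - l) = (-1 : A) ^ k := by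
      rw [← pow_add]; congr 1; omega
    have t1 : M l (M (k - l) h g) f
        = (-1 : A) ^ (k - l) * ((-1 : A) ^ l * M l f (M (k - l) g h)) := by
      rw [hsl (M (k - l) h g) f, hsl' h g, hp (k - l) f (M (k - l) g h)]; ring
    have t2 : M l h (M (k - l) g f)
        = (-1 : A) ^ (k - l) * ((-1 : A) ^ l * M l (M (k - l) f g) h) := by
      rw [hsl' g f, hp (k - l) h (M (k - l) f g), hsl h (M (k - l) f g)]
    have t3 : M (k - l) (M l h g) f
        = (-1 : A) ^ l * ((-1 : A) ^ (k - l) * M (k - l) f (M l g h)) := by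
      rw [hsl' (M l h g) f, hsl h g, hp' l f (M l g h)]; ring
    have t4 : M (k - l) h (M l g f)
        = (-1 : A) ^ l * ((-1 : A) ^ (k - l) * M (k - l) (M l f g) h) := by
      rw [hsl g f, hp' l h (M l f g), hsl' h (M l f g)]
    simp only [gerstenhaber]
    rw [t1, t2, t3, t4, ← hee]
    ring
  have hsq : (-1 : A) ^ k * (-1 : A) ^ k = 1 := by
    rw [← pow_add]; exact Even.neg_one_pow ⟨k, rfl⟩
  have part1 : ∀ f g h : A, R f g h = -((-1 : A) ^ k * R h g f) := by
    intro f g h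
    rw [hR f g h, hR h g f]
    rw [Finset.sum_congr rfl (hkey f g h)]
    rw [Finset.sum_neg_distrib, ← Finset.mul_sum]
    rw [smul_neg, mul_neg, neg_neg, mul_smul_comm, ← mul_assoc, hsq, one_mul]
  refine ⟨part1, ?_⟩
  intro hodd f g h
  have hrev : ∀ f g h : A, R f g h = R h g f := by
    intro f g h
    rw [part1 f g h, hodd.neg_one_pow, neg_one_mul, neg_neg]
  set v := ![f, g, h] with hv
  set S := ∑ σ : Equiv.Perm (Fin 3),
      (Equiv.Perm.sign σ : ℤ) • R (v (σ 0)) (v (σ 1)) (v (σ 2)) with hS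
  have hSS : -S = S := by
    rw [hS, ← Finset.sum_neg_distrib]
    refine Fintype.sum_equiv (Equiv.mulRight (Equiv.swap 0 2)) _ _ ?_
    intro σ
    simp only [Equiv.coe_mulRight, Equiv.Perm.mul_apply]
    have hsw : Equiv.Perm.sign (σ * Equiv.swap (0 : Fin 3) 2) = -Equiv.Perm.sign σ := by
      rw [Equiv.Perm.sign_mul, Equiv.Perm.sign_swap (by decide)]; exact mul_neg_one _
    rw [hsw]
    have e0 : Equiv.swap (0 : Fin 3) 2 0 = 2 := by decide
    have e1 : Equiv.swap (0 : Fin 3) 2 1 = 1 := by decide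
    have e2 : Equiv.swap (0 : Fin 3) 2 2 = 0 := by decide
    rw [e0, e1, e2, hrev (v (σ 2)) (v (σ 1)) (v (σ 0))]
    push_cast
    rw [neg_smul]
  have h2 : S + S = 0 := by nth_rewrite 1 [← hSS]; exact neg_add_cancel S
  have : S = (1 / 2 : ℚ) • ((2 : ℚ) • S) := by
    rw [smul_smul]; norm_num
  rw [this, two_smul, h2, smul_zero]
end

section
/- Let A be a commutative ℚ-algebra, ε ∈ {1, −1}, and M : A × A → A an additive bilinear map whose Hochschild coboundary has pure reversal parity: δM(f,g,h) = −ε·δM(h,g,f) for all f,g,h ∈ A. Then the ε-symmetric part Mᵉ of M, defined by Mᵉ(f,g) = (1/2)(M(f,g) + ε·M(g,f)), satisfies δ(Mᵉ) = δM. Hence any solution M_k of the Hochschild equation δM_k = R_k with R_k of reversal parity −(−1)^k can be chosen with the Weyl-type symmetry M_k(f,g) = (−1)^k M_k(g,f). -/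
/-- Hochschild coboundary of a bilinear map:
`δM(f,g,h) = f·M(g,h) − M(f·g,h) + M(f,g·h) − M(f,g)·h`. -/
def hochschildδ₂ {A : Type*} [CommRing A] (M : A → A → A) : A → A → A → A :=
  fun f g h => f * M g h - M (f * g) h + M f (g * h) - M f g * h

lemma hochschildδ_sym_aux {A : Type*} [CommRing A] [Algebra ℚ A]
    (ε : A) (M : A → A → A)
    (hδ : ∀ f g h : A, hochschildδ₂ M f g h = -(ε * hochschildδ₂ M h g f)) :
    ∀ f g h : A,
      hochschildδ₂ (fun f g => (1 / 2 : ℚ) • (M f g + ε * M g f)) f g h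
        = hochschildδ₂ M f g h := by
  intro f g h
  have hp := hδ f g h
  simp only [hochschildδ₂] at hp
  show f * ((1 / 2 : ℚ) • (M g h + ε * M h g)) - (1 / 2 : ℚ) • (M (f * g) h + ε * M h (f * g))
      + (1 / 2 : ℚ) • (M f (g * h) + ε * M (g * h) f) - (1 / 2 : ℚ) • (M f g + ε * M g f) * h
    = f * M g h - M (f * g) h + M f (g * h) - M f g * h
  rw [mul_comm h g, mul_comm g f] at hp
  simp only [Algebra.smul_def]
  set c : A := algebraMap ℚ A (1 / 2) with hc
  have h2 : c * 2 = 1 := by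
    rw [hc, show (2 : A) = algebraMap ℚ A 2 from (map_ofNat _ 2).symm, ← map_mul]
    norm_num
  linear_combination (-c) * hp +
    (f * M g h - M (f * g) h + M f (g * h) - M f g * h) * h2

/-- **The ε-symmetric part has the same Hochschild coboundary:** if ε ∈ {1,−1} and the
additive bilinear map M has δM(f,g,h) = −ε·δM(h,g,f), then
Mᵉ(f,g) = (1/2)(M(f,g) + ε·M(g,f)) satisfies δ(Mᵉ) = δM.  Hence any solution M_k of
δM_k = R_k with R_k of reversal parity −(−1)^k can be chosen with the Weyl-type
symmetry M_k(f,g) = (−1)^k M_k(g,f). -/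
theorem hochschildδ_symmetric_part {A : Type*} [CommRing A] [Algebra ℚ A]
    (ε : A) (hε : ε = 1 ∨ ε = -1) (M : A → A → A)
    (haddl : ∀ a b c : A, M (a + b) c = M a c + M b c)
    (haddr : ∀ a b c : A, M a (b + c) = M a b + M a c)
    (hδparity : ∀ f g h : A, hochschildδ₂ M f g h = -(ε * hochschildδ₂ M h g f)) :
    (∀ f g h : A,
      hochschildδ₂ (fun f g => (1 / 2 : ℚ) • (M f g + ε * M g f)) f g h
        = hochschildδ₂ M f g h) ∧
    (∀ (k : ℕ) (R : A → A → A → A),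
      (∀ f g h : A, R f g h = -((-1 : A) ^ k * R h g f)) →
      (∀ f g h : A, hochschildδ₂ M f g h = R f g h) →
      ∃ M' : A → A → A,
        (∀ f g h : A, hochschildδ₂ M' f g h = R f g h) ∧
        (∀ f g : A, M' f g = (-1 : A) ^ k * M' g f)) := by
  constructor
  · exact hochschildδ_sym_aux ε M hδparity
  · intro k R hRpar hδR
    set ε' : A := (-1 : A) ^ k with hε'
    have hε'sq : ε' * ε' = 1 := by
      rw [hε', ← mul_pow]; norm_num
    have hδ' : ∀ f g h : A, hochschildδ₂ M f g h = -(ε' * hochschildδ₂ M h g f) := by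
      intro f g h
      rw [hδR f g h, hδR h g f, hRpar f g h]
    refine ⟨fun f g => (1 / 2 : ℚ) • (M f g + ε' * M g f), ?_, ?_⟩
    · intro f g h
      rw [hochschildδ_sym_aux ε' M hδ' f g h, hδR]
    · intro f g
      show (1 / 2 : ℚ) • (M f g + ε' * M g f) = ε' * ((1 / 2 : ℚ) • (M g f + ε' * M f g))
      rw [mul_smul_comm]
      congr 1
      linear_combination (-(M f g)) * hε'sq
end

section
/- Let A be a commutative ℚ-algebra, k ≥ 2 an integer, and M₁, …, M_{k−1} : A × A → A additive bilinear maps satisfying the recursive associativity conditions δ(M_l) = (1/2) Σ_{j=1}^{l−1} [M_j, M_{l−j}] for every 1 ≤ l ≤ k−1 (so in particular δM₁ = 0). Then R_k := (1/2) Σ_{l=1}^{k−1} [M_l, M_{k−l}] is a Hochschild cocycle: δ(R_k) = 0, where δ on trilinear maps is the Hochschild coboundary. This is the necessary consistency condition for solving δ(M_k) = R_k at the next order. -/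
/-- Hochschild coboundary of a trilinear map:
`δN(f,g,h,k) = f·N(g,h,k) − N(f·g,h,k) + N(f,g·h,k) − N(f,g,h·k) + N(f,g,h)·k`. -/
def hochschildδ₃ {A : Type*} [CommRing A] (N : A → A → A → A) : A → A → A → A → A :=
  fun f g h k => f * N g h k - N (f * g) h k + N f (g * h) k - N f g (h * k) + N f g h * k

/-- Auxiliary: the literal bracket of a trilinear map with a bilinear map. -/
def brTB {A : Type*} [CommRing A] (T : A → A → A → A) (B : A → A → A) : A → A → A → A → A :=
  fun f g h j => T (B f g) h j - T f (B g h) j + T f g (B h j) - B (T f g h) j - B f (T g h j)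

section helpers
variable {A : Type*} [CommRing A]

lemma subl_of_addl (M : A → A → A) (h : ∀ x y z : A, M (x + y) z = M x z + M y z) :
    ∀ x y z : A, M (x - y) z = M x z - M y z := by
  intro x y z
  have h2 := h (x - y) y z
  rw [sub_add_cancel] at h2
  exact eq_sub_of_add_eq h2.symm

lemma subr_of_addr (M : A → A → A) (h : ∀ x y z : A, M x (y + z) = M x y + M x z) :
    ∀ x y z : A, M x (y - z) = M x y - M x z := by
  intro x y z
  have h2 := h x (y - z) z
  rw [sub_add_cancel] at h2
  exact eq_sub_of_add_eq h2.symm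

lemma key_delta (M N : A → A → A)
    (hMl : ∀ x y z : A, M (x + y) z = M x z + M y z)
    (hMr : ∀ x y z : A, M x (y + z) = M x y + M x z)
    (hNl : ∀ x y z : A, N (x + y) z = N x z + N y z)
    (hNr : ∀ x y z : A, N x (y + z) = N x y + N x z)
    (f g h j : A) :
    hochschildδ₃ (gerstenhaber M N) f g h j
      = - brTB (hochschildδ₂ M) N f g h j - brTB (hochschildδ₂ N) M f g h j := by
  simp only [hochschildδ₃, hochschildδ₂, gerstenhaber, brTB,
    subl_of_addl M hMl, subr_of_addr M hMr, subl_of_addl N hNl, subr_of_addr N hNr,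
    hMl, hMr, hNl, hNr]
  ring

lemma key_jacobi (B₁ B₂ B₃ : A → A → A)
    (h1l : ∀ x y z : A, B₁ (x + y) z = B₁ x z + B₁ y z)
    (h1r : ∀ x y z : A, B₁ x (y + z) = B₁ x y + B₁ x z)
    (h2l : ∀ x y z : A, B₂ (x + y) z = B₂ x z + B₂ y z)
    (h2r : ∀ x y z : A, B₂ x (y + z) = B₂ x y + B₂ x z)
    (h3l : ∀ x y z : A, B₃ (x + y) z = B₃ x z + B₃ y z)
    (h3r : ∀ x y z : A, B₃ x (y + z) = B₃ x y + B₃ x z)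
    (f g h j : A) :
    brTB (gerstenhaber B₁ B₂) B₃ f g h j + brTB (gerstenhaber B₂ B₃) B₁ f g h j
      + brTB (gerstenhaber B₃ B₁) B₂ f g h j = 0 := by
  simp only [gerstenhaber, brTB,
    subl_of_addl B₁ h1l, subr_of_addr B₁ h1r, h1l, h1r,
    subl_of_addl B₂ h2l, subr_of_addr B₂ h2r, h2l, h2r,
    subl_of_addl B₃ h3l, subr_of_addr B₃ h3r, h3l, h3r]
  ring

end helpers

/-- **R_k is a Hochschild cocycle:** if M₁, …, M_{k−1} satisfy the recursive
associativity conditions δ(M_l) = (1/2)∑_{j=1}^{l−1} [M_j, M_{l−j}] for 1 ≤ l ≤ k−1,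
then R_k = (1/2)∑_{l=1}^{k−1} [M_l, M_{k−l}] satisfies δ(R_k) = 0. -/
theorem Rk_is_cocycle {A : Type*} [CommRing A] [Algebra ℚ A] (k : ℕ) (hk : 2 ≤ k)
    (M : ℕ → A → A → A)
    (haddl : ∀ l, 1 ≤ l → l ≤ k - 1 → ∀ x y z : A, M l (x + y) z = M l x z + M l y z)
    (haddr : ∀ l, 1 ≤ l → l ≤ k - 1 → ∀ x y z : A, M l x (y + z) = M l x y + M l x z)
    (hrec : ∀ l, 1 ≤ l → l ≤ k - 1 → ∀ f g h : A,
      hochschildδ₂ (M l) f g h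
        = (1 / 2 : ℚ) • ∑ j ∈ Finset.Ico 1 l, gerstenhaber (M j) (M (l - j)) f g h)
    (R : A → A → A → A)
    (hR : ∀ f g h : A,
      R f g h = (1 / 2 : ℚ) • ∑ l ∈ Finset.Ico 1 k, gerstenhaber (M l) (M (k - l)) f g h) :
    ∀ f g h j : A, hochschildδ₃ R f g h j = 0 := by
  intro f g h j
  -- Step 1: pull out the 1/2 and turn δ₃ of the sum into a sum of δ₃'s
  have step1 : hochschildδ₃ R f g h j
      = (1/2 : ℚ) • ∑ l ∈ Finset.Ico 1 k,
          hochschildδ₃ (gerstenhaber (M l) (M (k - l))) f g h j := by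
    simp only [hochschildδ₃, hR, mul_smul_comm, smul_mul_assoc, ← smul_sub, ← smul_add]
    congr 1
    simp only [Finset.mul_sum, Finset.sum_mul, ← Finset.sum_sub_distrib,
      ← Finset.sum_add_distrib]
  rw [step1]
  -- Step 2: rewrite each summand using key_delta
  have step3 : ∀ l ∈ Finset.Ico 1 k,
      hochschildδ₃ (gerstenhaber (M l) (M (k - l))) f g h j
        = - brTB (hochschildδ₂ (M l)) (M (k - l)) f g h j
          - brTB (hochschildδ₂ (M (k - l))) (M l) f g h j := by
    intro l hl
    rw [Finset.mem_Ico] at hl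
    exact key_delta _ _ (haddl l hl.1 (by omega)) (haddr l hl.1 (by omega))
      (haddl (k - l) (by omega) (by omega)) (haddr (k - l) (by omega) (by omega)) f g h j
  rw [Finset.sum_congr rfl step3]
  -- Step 3: reindex the second family with l ↦ k - l
  have hre : ∑ l ∈ Finset.Ico 1 k, brTB (hochschildδ₂ (M (k - l))) (M l) f g h j
      = ∑ l ∈ Finset.Ico 1 k, brTB (hochschildδ₂ (M l)) (M (k - l)) f g h j := by
    refine Finset.sum_nbij' (fun l => k - l) (fun l => k - l) ?_ ?_ ?_ ?_ ?_ <;>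
        intro a ha <;> simp only [Finset.mem_Ico] at * <;> try omega
    rw [show k - (k - a) = a from by omega]
  -- Step 4: the remaining single sum P is zero
  suffices hP : ∑ l ∈ Finset.Ico 1 k, brTB (hochschildδ₂ (M l)) (M (k - l)) f g h j = 0 by
    simp only [sub_eq_add_neg, Finset.sum_add_distrib, Finset.sum_neg_distrib, hre, hP]
    simp
  -- doubling: 2 • each summand equals an honest sum with no 1/2's
  have doubling : ∀ l ∈ Finset.Ico 1 k,
      (2 : ℚ) • brTB (hochschildδ₂ (M l)) (M (k - l)) f g h j
        = ∑ a ∈ Finset.Ico 1 l,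
            brTB (gerstenhaber (M a) (M (l - a))) (M (k - l)) f g h j := by
    intro l hl
    rw [Finset.mem_Ico] at hl
    have hBl : ∀ x y z : A, M (k - l) (x + y) z = M (k - l) x z + M (k - l) y z :=
      haddl _ (by omega) (by omega)
    have hBr : ∀ x y z : A, M (k - l) x (y + z) = M (k - l) x y + M (k - l) x z :=
      haddr _ (by omega) (by omega)
    have hX : ∀ p q r : A, hochschildδ₂ (M l) p q r
        = (1/2 : ℚ) • ∑ a ∈ Finset.Ico 1 l, gerstenhaber (M a) (M (l - a)) p q r :=
      hrec l hl.1 (by omega)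
    have hsub2 : ∀ x : A, (2 : ℚ) • ((1/2 : ℚ) • x) = x := by
      intro x; rw [smul_smul]; norm_num
    have e2 : ∀ x z : A, (2 : ℚ) • M (k - l) ((1/2 : ℚ) • x) z = M (k - l) x z := by
      intro x z
      rw [two_smul, ← hBl, ← add_smul]
      norm_num
    have e3 : ∀ x z : A, (2 : ℚ) • M (k - l) z ((1/2 : ℚ) • x) = M (k - l) z x := by
      intro x z
      rw [two_smul, ← hBr, ← add_smul]
      norm_num
    have hBsuml : ∀ (v : ℕ → A) (z : A),
        M (k - l) (∑ a ∈ Finset.Ico 1 l, v a) z = ∑ a ∈ Finset.Ico 1 l, M (k - l) (v a) z :=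
      fun v z => map_sum (AddMonoidHom.mk' (fun x => M (k - l) x z) (fun a b => hBl a b z)) v _
    have hBsumr : ∀ (v : ℕ → A) (z : A),
        M (k - l) z (∑ a ∈ Finset.Ico 1 l, v a) = ∑ a ∈ Finset.Ico 1 l, M (k - l) z (v a) :=
      fun v z => map_sum (AddMonoidHom.mk' (fun x => M (k - l) z x) (fun a b => hBr z a b)) v _
    simp only [brTB, hX, smul_sub, smul_add, hsub2, e2, e3]
    rw [hBsuml, hBsumr]
    simp only [← Finset.sum_sub_distrib, ← Finset.sum_add_distrib]
  -- the double sum vanishes (reindex to triples + rotation + Jacobi)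
  have hDS : ∑ l ∈ Finset.Ico 1 k, ∑ a ∈ Finset.Ico 1 l,
      brTB (gerstenhaber (M a) (M (l - a))) (M (k - l)) f g h j = 0 := by
    set T : Finset (ℕ × ℕ) :=
      (Finset.Ico 1 k ×ˢ Finset.Ico 1 k).filter (fun p => p.1 + p.2 ≤ k - 1) with hT
    have hmem : ∀ p : ℕ × ℕ, p ∈ T ↔ (1 ≤ p.1 ∧ p.1 < k) ∧ (1 ≤ p.2 ∧ p.2 < k) ∧ p.1 + p.2 ≤ k - 1 := by
      intro p
      simp [hT, Finset.mem_filter, Finset.mem_product, Finset.mem_Ico, and_assoc]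
    have hsig : ∑ l ∈ Finset.Ico 1 k, ∑ a ∈ Finset.Ico 1 l,
        brTB (gerstenhaber (M a) (M (l - a))) (M (k - l)) f g h j
        = ∑ p ∈ T, brTB (gerstenhaber (M p.1) (M p.2)) (M (k - p.1 - p.2)) f g h j := by
      rw [Finset.sum_sigma']
      refine Finset.sum_nbij' (fun p => (p.2, p.1 - p.2)) (fun p => ⟨p.1 + p.2, p.1⟩)
        ?_ ?_ ?_ ?_ ?_
      · rintro ⟨l, a⟩ hp
        simp only [Finset.mem_sigma, Finset.mem_Ico] at hp
        rw [hmem]; dsimp only; omega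
      · rintro ⟨a, b⟩ hp
        rw [hmem] at hp; dsimp only at hp
        simp only [Finset.mem_sigma, Finset.mem_Ico]; omega
      · rintro ⟨l, a⟩ hp
        simp only [Finset.mem_sigma, Finset.mem_Ico] at hp
        dsimp only
        rw [show a + (l - a) = l from by omega]
      · rintro ⟨a, b⟩ hp
        rw [hmem] at hp; dsimp only at hp
        simp only [Prod.mk.injEq, true_and, and_true]
        omega
      · rintro ⟨l, a⟩ hp
        simp only [Finset.mem_sigma, Finset.mem_Ico] at hp
        dsimp only
        rw [show k - a - (l - a) = k - l from by omega]
    rw [hsig]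
    -- rotations
    have hrot1 : ∑ p ∈ T, brTB (gerstenhaber (M p.1) (M p.2)) (M (k - p.1 - p.2)) f g h j
        = ∑ p ∈ T, brTB (gerstenhaber (M p.2) (M (k - p.1 - p.2))) (M p.1) f g h j := by
      refine Finset.sum_nbij' (fun p => (k - p.1 - p.2, p.1)) (fun p => (p.2, k - p.1 - p.2))
        ?_ ?_ ?_ ?_ ?_ <;> rintro ⟨a, b⟩ hp <;> rw [hmem] at hp <;> dsimp only at hp ⊢
      · rw [hmem]; dsimp only; omega
      · rw [hmem]; dsimp only; omega
      · simp only [Prod.mk.injEq, true_and, and_true]; omega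
      · simp only [Prod.mk.injEq, true_and, and_true]; omega
      · rw [show k - (k - a - b) - a = b from by omega]
    have hrot2 : ∑ p ∈ T, brTB (gerstenhaber (M p.1) (M p.2)) (M (k - p.1 - p.2)) f g h j
        = ∑ p ∈ T, brTB (gerstenhaber (M (k - p.1 - p.2)) (M p.1)) (M p.2) f g h j := by
      refine Finset.sum_nbij' (fun p => (p.2, k - p.1 - p.2)) (fun p => (k - p.1 - p.2, p.1))
        ?_ ?_ ?_ ?_ ?_ <;> rintro ⟨a, b⟩ hp <;> rw [hmem] at hp <;> dsimp only at hp ⊢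
      · rw [hmem]; dsimp only; omega
      · rw [hmem]; dsimp only; omega
      · simp only [Prod.mk.injEq, true_and, and_true]; omega
      · simp only [Prod.mk.injEq, true_and, and_true]; omega
      · rw [show k - b - (k - a - b) = a from by omega]
    have h3S : (∑ p ∈ T, brTB (gerstenhaber (M p.1) (M p.2)) (M (k - p.1 - p.2)) f g h j)
        + (∑ p ∈ T, brTB (gerstenhaber (M p.2) (M (k - p.1 - p.2))) (M p.1) f g h j)
        + (∑ p ∈ T, brTB (gerstenhaber (M (k - p.1 - p.2)) (M p.1)) (M p.2) f g h j) = 0 := by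
      rw [← Finset.sum_add_distrib, ← Finset.sum_add_distrib]
      apply Finset.sum_eq_zero
      intro p hp
      rw [hmem] at hp
      exact key_jacobi (M p.1) (M p.2) (M (k - p.1 - p.2))
        (haddl _ (by omega) (by omega)) (haddr _ (by omega) (by omega))
        (haddl _ (by omega) (by omega)) (haddr _ (by omega) (by omega))
        (haddl _ (by omega) (by omega)) (haddr _ (by omega) (by omega)) f g h j
    rw [← hrot1, ← hrot2] at h3S
    set S := ∑ p ∈ T, brTB (gerstenhaber (M p.1) (M p.2)) (M (k - p.1 - p.2)) f g h j with hS
    have h3 : (3 : ℚ) • S = 0 := by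
      rw [show (3 : ℚ) = 1 + 1 + 1 from by norm_num, add_smul, add_smul, one_smul]
      exact h3S
    have : S = (1/3 : ℚ) • ((3 : ℚ) • S) := by rw [smul_smul]; norm_num
    rw [this, h3, smul_zero]
  -- conclude P = 0
  have h2P : (2 : ℚ) • (∑ l ∈ Finset.Ico 1 k,
      brTB (hochschildδ₂ (M l)) (M (k - l)) f g h j) = 0 := by
    rw [Finset.smul_sum, Finset.sum_congr rfl doubling, hDS]
  have hhalf : (∑ l ∈ Finset.Ico 1 k, brTB (hochschildδ₂ (M l)) (M (k - l)) f g h j)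
      = (1/2 : ℚ) • ((2 : ℚ) • ∑ l ∈ Finset.Ico 1 k,
          brTB (hochschildδ₂ (M l)) (M (k - l)) f g h j) := by
    rw [smul_smul]; norm_num
  rw [hhalf, h2P, smul_zero]
end
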